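/- Let μ, ν be finitely supported probability measures on a metric space X with cost c = d^p, and let Π be a c-optimal transport plan between them. Then the support of Π contains no oriented cycle: there do not exist distinct points v_1,…,v_{n-1}, v_n = v_1 with Π({(v_i, v_{i+1})}) > 0 for all i < n and v_i ≠ v_{i+1}. -/

import Mathlib

open MeasureTheory ENNReal

/-- `π` is a coupling of `μ` and `ν`. -/
def IsCoupling {X : Type*} [MeasurableSpace X] (μ ν : Measure X)
    (π : Measure (X × X)) : Prop :=
  π.map Prod.fst = μ ∧ π.map Prod.snd = ν

/-- The `L^p` Wasserstein distance between two measures, as the infimal `p`-cost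
over all couplings, to the power `1/p`. -/
noncomputable def Wp {X : Type*} [MetricSpace X] [MeasurableSpace X]
    (p : ℝ) (μ ν : Measure X) : ℝ≥0∞ :=
  (⨅ (π : Measure (X × X)) (_ : IsCoupling μ ν π),
    ∫⁻ z, ENNReal.ofReal (dist z.1 z.2 ^ p) ∂π) ^ (1 / p)

/-- the support of an optimal transport plan between finitely
supported probability measures (for the cost `d^p`) contains no oriented cycle. -/
theorem stmt14 {X : Type*} [MetricSpace X] [MeasurableSpace X] [BorelSpace X]
    (p : ℝ) (hp : 1 ≤ p)
    (μ ν : Measure X) [IsProbabilityMeasure μ] [IsProbabilityMeasure ν]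
    (hμ : ∃ s : Finset X, μ (↑s : Set X)ᶜ = 0)
    (hν : ∃ s : Finset X, ν (↑s : Set X)ᶜ = 0)
    (π : Measure (X × X)) (hπ : IsCoupling μ ν π)
    (hopt : ∀ π' : Measure (X × X), IsCoupling μ ν π' →
      (∫⁻ z, ENNReal.ofReal (dist z.1 z.2 ^ p) ∂π) ≤
        (∫⁻ z, ENNReal.ofReal (dist z.1 z.2 ^ p) ∂π')) :
    ¬ ∃ (n : ℕ) (v : ℕ → X), 2 ≤ n ∧ v n = v 0 ∧
        (∀ i j, i < n → j < n → i ≠ j → v i ≠ v j) ∧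
        (∀ i < n, 0 < π {(v i, v (i + 1))}) := by
  classical
  rintro ⟨n, v, hn2, hvn, hdist, hpos⟩
  obtain ⟨s, hs⟩ := hμ
  obtain ⟨t, ht⟩ := hν
  have hn0 : 0 < n := by omega
  set c : X × X → ℝ≥0∞ := fun z => ENNReal.ofReal (dist z.1 z.2 ^ p) with hc
  haveI : MeasurableSingletonClass X :=
    ⟨fun a => isClosed_singleton.measurableSet⟩
  -- edges of the cycle
  set e : ℕ → X × X := fun i => (v i, v (i + 1)) with he
  have hedist : ∀ i j, i < n → j < n → i ≠ j → e i ≠ e j := by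
    intro i j hi hj hij h
    exact hdist i j hi hj hij (congrArg Prod.fst h)
  -- edges are not on the diagonal
  have hne : ∀ i < n, v i ≠ v (i + 1) := by
    intro i hi
    rcases eq_or_lt_of_le (Nat.succ_le_of_lt hi) with h | h
    · have h1 : v (i + 1) = v 0 := by rw [show i + 1 = n from h, hvn]
      rw [h1]
      exact hdist i 0 hi (by omega) (by omega)
    · exact hdist i (i + 1) hi h (by omega)
  -- ε is the minimal edge mass
  have hrange : (Finset.range n).Nonempty := ⟨0, Finset.mem_range.2 hn0⟩
  set ε : ℝ≥0∞ := (Finset.range n).inf' hrange (fun i => π {e i}) with hε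
  have hεpos : 0 < ε :=
    (Finset.lt_inf'_iff hrange).2 fun i hi => hpos i (Finset.mem_range.1 hi)
  have hεle : ∀ i < n, ε ≤ π {e i} := fun i hi =>
    Finset.inf'_le _ (Finset.mem_range.2 hi)
  have hπuniv : π Set.univ = 1 := by
    have h1 : π.map Prod.fst Set.univ = π Set.univ :=
      Measure.map_apply measurable_fst MeasurableSet.univ
    rw [hπ.1] at h1
    rw [← h1, measure_univ]
  have hεtop : ε ≠ ⊤ := by
    refine ne_top_of_le_ne_top (by simp [hπuniv] : π Set.univ ≠ ⊤)
      (le_trans (hεle 0 hn0) (measure_mono (Set.subset_univ _)))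
  -- the two perturbation measures
  set ρ : Measure (X × X) := ε • ∑ i ∈ Finset.range n, Measure.dirac (e i) with hρ
  set σm : Measure (X × X) := ε • ∑ i ∈ Finset.range n, Measure.dirac (v i, v i) with hσm
  -- evaluation of ρ and σm
  have hρapp : ∀ B : Set (X × X), MeasurableSet B →
      ρ B = ε * ∑ i ∈ Finset.range n, (if e i ∈ B then (1 : ℝ≥0∞) else 0) := by
    intro B hB
    rw [hρ, Measure.smul_apply, Measure.finset_sum_apply, smul_eq_mul]
    congr 1
    refine Finset.sum_congr rfl fun i _ => ?_
    rw [Measure.dirac_apply' _ hB]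
    simp [Set.indicator_apply]
  have hσapp : ∀ B : Set (X × X), MeasurableSet B →
      σm B = ε * ∑ i ∈ Finset.range n,
        (if ((v i, v i) : X × X) ∈ B then (1 : ℝ≥0∞) else 0) := by
    intro B hB
    rw [hσm, Measure.smul_apply, Measure.finset_sum_apply, smul_eq_mul]
    congr 1
    refine Finset.sum_congr rfl fun i _ => ?_
    rw [Measure.dirac_apply' _ hB]
    simp [Set.indicator_apply]
  -- ρ ≤ π
  have hρle : ρ ≤ π := by
    refine Measure.le_iff.2 fun B hB => ?_
    rw [hρapp B hB]
    set T := (Finset.range n).filter (fun i => e i ∈ B) with hT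
    have hsum : (∑ i ∈ Finset.range n, if e i ∈ B then (1 : ℝ≥0∞) else 0)
        = (T.card : ℝ≥0∞) := by
      rw [hT, Finset.sum_boole]
    rw [hsum]
    have hsub : ∀ i ∈ T, ε ≤ π {e i} := fun i hi =>
      hεle i (Finset.mem_range.1 (Finset.mem_filter.1 hi).1)
    calc ε * T.card = ∑ _i ∈ T, ε := by
          rw [Finset.sum_const, nsmul_eq_mul, mul_comm]
      _ ≤ ∑ i ∈ T, π {e i} := Finset.sum_le_sum hsub
      _ = π (⋃ i ∈ T, {e i}) := by
          refine (measure_biUnion_finset ?_ fun i _ => measurableSet_singleton _).symm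
          intro i hi j hj hij
          simp only [Function.onFun, Set.disjoint_singleton]
          exact hedist i j (Finset.mem_range.1 (Finset.mem_filter.1 hi).1)
            (Finset.mem_range.1 (Finset.mem_filter.1 hj).1) hij
      _ ≤ π B := by
          refine measure_mono ?_
          intro z hz
          simp only [Set.mem_iUnion, Set.mem_singleton_iff] at hz
          obtain ⟨i, hi, rfl⟩ := hz
          exact (Finset.mem_filter.1 hi).2
  haveI : IsFiniteMeasure ρ := by
    refine ⟨?_⟩
    rw [hρapp Set.univ MeasurableSet.univ]
    refine ENNReal.mul_lt_top hεtop.lt_top (ENNReal.sum_lt_top.2 fun i _ => ?_)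
    simp only [Set.mem_univ, if_true]
    exact ENNReal.one_lt_top
  -- the competitor plan
  set π' : Measure (X × X) := (π - ρ) + σm with hπ'
  -- reindexing the cycle
  have hcyc : ∀ A : Set X,
      (∑ i ∈ Finset.range n, if v (i + 1) ∈ A then (1 : ℕ) else 0)
        = ∑ i ∈ Finset.range n, if v i ∈ A then (1 : ℕ) else 0 := by
    intro A
    have h1 := Finset.sum_range_succ' (fun i => if v i ∈ A then (1 : ℕ) else 0) n
    have h2 := Finset.sum_range_succ (fun i => if v i ∈ A then (1 : ℕ) else 0) n
    simp only [hvn] at h2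
    omega
  have hcycE : ∀ A : Set X,
      (∑ i ∈ Finset.range n, if v (i + 1) ∈ A then (1 : ℝ≥0∞) else 0)
        = ∑ i ∈ Finset.range n, if v i ∈ A then (1 : ℝ≥0∞) else 0 := by
    intro A
    calc (∑ i ∈ Finset.range n, if v (i + 1) ∈ A then (1 : ℝ≥0∞) else 0)
        = ((∑ i ∈ Finset.range n, if v (i + 1) ∈ A then 1 else 0 : ℕ) : ℝ≥0∞) := by
          rw [Nat.cast_sum]
          refine Finset.sum_congr rfl fun i _ => ?_
          split <;> simp
      _ = ((∑ i ∈ Finset.range n, if v i ∈ A then 1 else 0 : ℕ) : ℝ≥0∞) := by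
          rw [hcyc A]
      _ = ∑ i ∈ Finset.range n, if v i ∈ A then (1 : ℝ≥0∞) else 0 := by
          rw [Nat.cast_sum]
          refine Finset.sum_congr rfl fun i _ => ?_
          split <;> simp
  -- π' is a coupling
  have hcoup : IsCoupling μ ν π' := by
    constructor
    · ext A hA
      have hBm : MeasurableSet (Prod.fst ⁻¹' A : Set (X × X)) :=
        (measurable_fst : Measurable (Prod.fst : X × X → X)) hA
      rw [Measure.map_apply measurable_fst hA, hπ', Measure.add_apply,
        Measure.sub_apply hBm hρle, hρapp _ hBm, hσapp _ hBm]
      have hfst : π (Prod.fst ⁻¹' A) = μ A := by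
        rw [← hπ.1, Measure.map_apply measurable_fst hA]
      have hsum : (∑ i ∈ Finset.range n, if e i ∈ Prod.fst ⁻¹' A then (1 : ℝ≥0∞) else 0)
          = ∑ i ∈ Finset.range n,
            if ((v i, v i) : X × X) ∈ Prod.fst ⁻¹' A then (1 : ℝ≥0∞) else 0 := by
        refine Finset.sum_congr rfl fun i _ => if_congr ?_ rfl rfl
        simp [he]
      rw [hfst, hsum]
      refine tsub_add_cancel_of_le ?_
      rw [← hsum, ← hρapp _ hBm, ← hfst]
      exact Measure.le_iff'.1 hρle _
    · ext A hA
      have hBm : MeasurableSet (Prod.snd ⁻¹' A : Set (X × X)) :=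
        (measurable_snd : Measurable (Prod.snd : X × X → X)) hA
      rw [Measure.map_apply measurable_snd hA, hπ', Measure.add_apply,
        Measure.sub_apply hBm hρle, hρapp _ hBm, hσapp _ hBm]
      have hsnd : π (Prod.snd ⁻¹' A) = ν A := by
        rw [← hπ.2, Measure.map_apply measurable_snd hA]
      have hsum : (∑ i ∈ Finset.range n, if e i ∈ Prod.snd ⁻¹' A then (1 : ℝ≥0∞) else 0)
          = ∑ i ∈ Finset.range n,
            if ((v i, v i) : X × X) ∈ Prod.snd ⁻¹' A then (1 : ℝ≥0∞) else 0 := by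
        calc (∑ i ∈ Finset.range n, if e i ∈ Prod.snd ⁻¹' A then (1 : ℝ≥0∞) else 0)
            = ∑ i ∈ Finset.range n, if v (i + 1) ∈ A then (1 : ℝ≥0∞) else 0 :=
              Finset.sum_congr rfl fun i _ => if_congr (by simp [he]) rfl rfl
          _ = ∑ i ∈ Finset.range n, if v i ∈ A then (1 : ℝ≥0∞) else 0 := hcycE A
          _ = ∑ i ∈ Finset.range n,
              if ((v i, v i) : X × X) ∈ Prod.snd ⁻¹' A then (1 : ℝ≥0∞) else 0 :=
              Finset.sum_congr rfl fun i _ => if_congr (by simp) rfl rfl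
      rw [hsnd, hsum]
      refine tsub_add_cancel_of_le ?_
      rw [← hsum, ← hρapp _ hBm, ← hsnd]
      exact Measure.le_iff'.1 hρle _
  -- cost of σm is zero
  have hσcost : ∫⁻ z, c z ∂σm = 0 := by
    rw [hσm, lintegral_smul_measure, lintegral_finset_sum_measure]
    have hz : ∀ i ∈ Finset.range n,
        ∫⁻ z, c z ∂(Measure.dirac ((v i, v i) : X × X)) = 0 := by
      intro i _
      rw [lintegral_dirac _ _]
      simp [hc, Real.zero_rpow (by linarith : p ≠ 0)]
    rw [Finset.sum_congr rfl hz]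
    simp
  -- cost of ρ is positive
  have hρcost : 0 < ∫⁻ z, c z ∂ρ := by
    rw [hρ, lintegral_smul_measure, lintegral_finset_sum_measure]
    refine ENNReal.mul_pos hεpos.ne' ?_
    have h0 : (0 : ℝ≥0∞) < ∫⁻ z, c z ∂(Measure.dirac (e 0)) := by
      rw [lintegral_dirac _ _]
      exact ENNReal.ofReal_pos.2 (Real.rpow_pos_of_pos (dist_pos.2 (hne 0 hn0)) p)
    exact (lt_of_lt_of_le h0
      (Finset.single_le_sum (f := fun i => ∫⁻ z, c z ∂(Measure.dirac (e i)))
        (fun i _ => zero_le) (Finset.mem_range.2 hn0))).ne'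
  -- total cost of π is finite
  have hπfin : ∫⁻ z, c z ∂π < ⊤ := by
    set M : ℝ≥0∞ := (s ×ˢ t).sup c with hM
    have hMlt : M < ⊤ := (Finset.sup_lt_iff (by simp)).2 fun z _ => ofReal_lt_top
    have hsm : MeasurableSet (↑s : Set X) := s.finite_toSet.measurableSet
    have htm : MeasurableSet (↑t : Set X) := t.finite_toSet.measurableSet
    have hC : π ((↑s ×ˢ ↑t : Set (X × X))ᶜ) = 0 := by
      have hsub : (↑s ×ˢ ↑t : Set (X × X))ᶜ ⊆
          (Prod.fst ⁻¹' (↑s : Set X)ᶜ) ∪ (Prod.snd ⁻¹' (↑t : Set X)ᶜ) := by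
        intro z hz
        simp only [Set.mem_compl_iff, Set.mem_prod, not_and_or] at hz
        simpa using hz
      refine measure_mono_null hsub ?_
      have h1 : π (Prod.fst ⁻¹' (↑s : Set X)ᶜ) = 0 := by
        rw [← Measure.map_apply measurable_fst hsm.compl, hπ.1]; exact hs
      have h2 : π (Prod.snd ⁻¹' (↑t : Set X)ᶜ) = 0 := by
        rw [← Measure.map_apply measurable_snd htm.compl, hπ.2]; exact ht
      exact le_antisymm
        (le_trans (measure_union_le _ _) (by rw [h1, h2]; simp)) zero_le
    have hmem : ∀ᵐ z ∂π, z ∈ (↑s ×ˢ ↑t : Set (X × X)) := by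
      rw [Filter.eventually_iff, MeasureTheory.mem_ae_iff]
      exact hC
    have hae : ∀ᵐ z ∂π, c z ≤ M := by
      filter_upwards [hmem] with z hz
      refine Finset.le_sup ?_
      rw [Finset.mem_product]
      exact ⟨hz.1, hz.2⟩
    calc ∫⁻ z, c z ∂π ≤ ∫⁻ _, M ∂π := lintegral_mono_ae hae
      _ = M * π Set.univ := lintegral_const M
      _ = M := by rw [hπuniv, mul_one]
      _ < ⊤ := hMlt
  -- put everything together
  have hsplit : ∫⁻ z, c z ∂π = ∫⁻ z, c z ∂(π - ρ) + ∫⁻ z, c z ∂ρ := by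
    conv_lhs => rw [← Measure.sub_add_cancel_of_le hρle]
    rw [lintegral_add_measure]
  have hπ'cost : ∫⁻ z, c z ∂π' = ∫⁻ z, c z ∂(π - ρ) := by
    rw [hπ', lintegral_add_measure, hσcost, add_zero]
  have hle := hopt π' hcoup
  rw [hπ'cost] at hle
  rw [hsplit] at hle
  have hAfin : ∫⁻ z, c z ∂(π - ρ) ≠ ⊤ := by
    refine ne_top_of_le_ne_top hπfin.ne ?_
    rw [hsplit]
    exact le_self_add
  exact absurd hle (not_le.2 (ENNReal.lt_add_right hAfin hρcost.ne'))
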